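/- For every n ≥ 1, Σ_{T ∈ PT(n)} n! / ∏_{v ∈ T} ((-1)^{h_v} · h_v) = −1, where PT(n) is the set of plane trees with n vertices. -/

import Mathlib

/-- Plane trees: nonempty rooted trees whose subtrees at each vertex are linearly ordered. -/
inductive PTree : Type
  | node : List PTree → PTree

namespace PTree

mutual
/-- The number of vertices of a plane tree. -/
def size : PTree → ℕ
  | .node cs => sizeList cs + 1
/-- The total number of vertices of a plane forest (a list of plane trees). -/
def sizeList : List PTree → ℕ
  | [] => 0
  | t :: ts => size t + sizeList ts
end

mutual
/-- The multiset of hook lengths of a plane tree: the hook length of a vertex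
is the number of its descendants, counting the vertex itself. -/
def hooks : PTree → Multiset ℕ+
  | .node cs => ⟨sizeList cs + 1, Nat.succ_pos _⟩ ::ₘ hooksList cs
/-- The multiset of hook lengths of a plane forest. -/
def hooksList : List PTree → Multiset ℕ+
  | [] => 0
  | t :: ts => hooks t + hooksList ts
end

end PTree


noncomputable instance : DecidableEq PTree := Classical.decEq _

open PTree Finset

/-- Forests of total size m, as a Finset. -/
noncomputable def forestsF : ℕ → Finset (List PTree)
  | 0 => {[]}
  | (m+1) => (Finset.range (m+1)).attach.biUnion fun k =>
      (((forestsF k.1).image PTree.node) ×ˢ forestsF (m - k.1)).image fun p => p.1 :: p.2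
termination_by m => m
decreasing_by
  · exact Finset.mem_range.mp k.2
  · have := Finset.mem_range.mp k.2; omega

lemma size_node (cs : List PTree) : (PTree.node cs).size = sizeList cs + 1 := by
  simp [PTree.size]

lemma sizeList_cons (t : PTree) (ts : List PTree) :
    sizeList (t :: ts) = t.size + sizeList ts := by simp [PTree.sizeList]

lemma size_pos (t : PTree) : 1 ≤ t.size := by
  cases t with | node cs => rw [size_node]; omega

lemma mem_forestsF : ∀ m (ts : List PTree), ts ∈ forestsF m ↔ sizeList ts = m := by
  intro m
  induction m using Nat.strong_induction_on with
  | _ m ih =>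
    intro ts
    match m with
    | 0 =>
      rw [forestsF]
      simp only [Finset.mem_singleton]
      constructor
      · rintro rfl; simp [PTree.sizeList]
      · intro h
        cases ts with
        | nil => rfl
        | cons t ts => rw [sizeList_cons] at h; have := size_pos t; omega
    | (m+1) =>
      rw [forestsF]
      simp only [Finset.mem_biUnion, Finset.mem_attach, Finset.mem_image,
        Finset.mem_product, true_and, Subtype.exists, Finset.mem_range]
      constructor
      · rintro ⟨k, hk, ⟨t, rest⟩, ⟨ht, hrest⟩, rfl⟩
        simp only at ht hrest ⊢
        obtain ⟨cs, hcs, rfl⟩ := ht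
        rw [sizeList_cons, size_node]
        rw [ih k hk cs] at hcs
        rw [ih (m - k) (by omega) rest] at hrest
        omega
      · intro h
        cases ts with
        | nil => simp [PTree.sizeList] at h
        | cons t rest =>
          cases t with
          | node cs =>
            rw [sizeList_cons, size_node] at h
            refine ⟨sizeList cs, by omega, ⟨PTree.node cs, rest⟩, ⟨?_, ?_⟩, rfl⟩
            · exact ⟨cs, (ih _ (by omega) cs).mpr rfl, rfl⟩
            · rw [ih (m - sizeList cs) (by omega) rest]; omega


/-- Weight of a tree: inverse of the alternating hook product. -/
noncomputable def wt (t : PTree) : ℚ :=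
  ((t.hooks.map fun h => (-1:ℚ)^(h:ℕ) * (h:ℚ)).prod)⁻¹

noncomputable def wtL (ts : List PTree) : ℚ :=
  (((hooksList ts).map fun h => (-1:ℚ)^(h:ℕ) * (h:ℚ)).prod)⁻¹

lemma wtL_nil : wtL [] = 1 := by simp [wtL, PTree.hooksList]

lemma wtL_cons (t : PTree) (ts : List PTree) : wtL (t :: ts) = wt t * wtL ts := by
  simp [wtL, wt, PTree.hooksList, Multiset.map_add, Multiset.prod_add, mul_inv]
  ring

lemma aux (p : ℕ+) (s : Multiset ℕ+) : ((p ::ₘ s : Multiset ℕ+).map fun h => (-1:ℚ)^(h:ℕ) * (h:ℚ)).prod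
    = ((-1:ℚ)^(p:ℕ) * (p:ℚ)) * ((s.map fun h => (-1:ℚ)^(h:ℕ) * (h:ℚ)).prod) := by
  simp

lemma wt_node (cs : List PTree) :
    wt (PTree.node cs) = ((-1:ℚ)^(sizeList cs + 1) * ((sizeList cs : ℚ) + 1))⁻¹ * wtL cs := by
  show (((((sizeList cs).succPNat) ::ₘ hooksList cs).map
    fun h => (-1:ℚ)^(h:ℕ) * (h:ℚ)).prod)⁻¹ = _
  rw [aux, mul_inv, wtL, Nat.succPNat_coe, Nat.cast_succ]

noncomputable def L (m : ℕ) : ℚ := ∑ ts ∈ forestsF m, wtL ts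

lemma L_zero : L 0 = 1 := by
  rw [L, forestsF]
  simp [wtL_nil]

lemma sum_image_node (k : ℕ) :
    ∑ t ∈ (forestsF k).image PTree.node, wt t
      = ((-1:ℚ)^(k+1) * ((k:ℚ)+1))⁻¹ * L k := by
  rw [Finset.sum_image (by intro x _ y _ h; injection h), L, Finset.mul_sum]
  apply Finset.sum_congr rfl
  intro cs hcs
  rw [wt_node, (mem_forestsF k cs).mp hcs]

lemma L_succ (m : ℕ) :
    L (m+1) = ∑ k ∈ Finset.range (m+1),
      ((-1:ℚ)^(k+1) * ((k:ℚ)+1))⁻¹ * L k * L (m-k) := by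
  have hdisj : (↑(Finset.range (m+1)).attach : Set {x // x ∈ Finset.range (m+1)}).PairwiseDisjoint
      (fun k : {x // x ∈ Finset.range (m+1)} =>
        (((forestsF k.1).image PTree.node) ×ˢ forestsF (m - k.1)).image fun p => p.1 :: p.2) := by
    intro a _ b _ hab
    apply Finset.disjoint_left.mpr
    intro x hxa hxb
    obtain ⟨⟨t, rest⟩, hp, rfl⟩ := Finset.mem_image.mp hxa
    obtain ⟨⟨t', rest'⟩, hp', hx'⟩ := Finset.mem_image.mp hxb
    simp only [Finset.mem_product] at hp hp'
    rw [List.cons.injEq] at hx'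
    obtain ⟨rfl, rfl⟩ := hx'
    obtain ⟨cs, hcs, rfl⟩ := Finset.mem_image.mp hp.1
    obtain ⟨cs', hcs', hcs''⟩ := Finset.mem_image.mp hp'.1
    injection hcs'' with hcc
    subst hcc
    rw [mem_forestsF] at hcs hcs'
    exact hab (Subtype.ext (hcs ▸ hcs'))
  rw [L, forestsF, Finset.sum_biUnion hdisj,
    ← Finset.sum_attach (Finset.range (m+1))
      (fun k => ((-1:ℚ)^(k+1) * ((k:ℚ)+1))⁻¹ * L k * L (m-k))]
  apply Finset.sum_congr rfl
  intro k _
  rw [Finset.sum_image (by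
    intro x _ y _ h
    rw [List.cons.injEq] at h
    exact Prod.ext h.1 h.2)]
  rw [Finset.sum_product]
  simp_rw [wtL_cons]
  rw [← Finset.sum_mul_sum, sum_image_node]
  rfl

lemma key (m : ℕ) :
    ∑ k ∈ Finset.range (m+1), (-1:ℚ)^k * (((m+1).choose (k+1) : ℕ) : ℚ) = 1 := by
  have h := Int.alternating_sum_range_choose (n := m+1)
  rw [if_neg (Nat.succ_ne_zero m)] at h
  have h2 : ∑ i ∈ Finset.range (m+2), (-1:ℚ)^i * (((m+1).choose i : ℕ) : ℚ) = 0 := by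
    exact_mod_cast congrArg (Int.cast : ℤ → ℚ) h
  rw [Finset.sum_range_succ'] at h2
  have h3 : ∑ k ∈ Finset.range (m+1), (-1:ℚ)^(k+1) * (((m+1).choose (k+1) : ℕ) : ℚ)
      = - ∑ k ∈ Finset.range (m+1), (-1:ℚ)^k * (((m+1).choose (k+1) : ℕ) : ℚ) := by
    rw [← Finset.sum_neg_distrib]
    apply Finset.sum_congr rfl
    intro k _
    ring
  rw [h3] at h2
  simp at h2
  linarith

lemma term_eq (k j : ℕ) :
    ((-1:ℚ)^(k+1) * ((k:ℚ)+1))⁻¹ * ((-1:ℚ)^k / (k.factorial : ℚ)) * ((-1:ℚ)^j / (j.factorial : ℚ))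
    = ((-1:ℚ)^(k+j+1) * (-1:ℚ)^k) * ((((k+j+1).choose (k+1) : ℕ) : ℚ) / (((k+j+1).factorial : ℕ) : ℚ)) := by
  have hch : (((k+j+1).choose (k+1) : ℕ) : ℚ) * (((k+1).factorial : ℕ) : ℚ) * ((j.factorial : ℕ) : ℚ)
      = (((k+j+1).factorial : ℕ) : ℚ) := by
    have h := Nat.choose_mul_factorial_mul_factorial (show k+1 ≤ k+j+1 by omega)
    rw [show k+j+1-(k+1) = j from by omega] at h
    exact_mod_cast h
  have hfs : (((k+1).factorial : ℕ) : ℚ) = ((k:ℚ)+1) * ((k.factorial : ℕ) : ℚ) := by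
    exact_mod_cast Nat.factorial_succ k
  have hch' : (((k+j+1).choose (k+1) : ℕ) : ℚ) * (((k:ℚ)+1) * ((k.factorial : ℕ) : ℚ)) * ((j.factorial : ℕ) : ℚ)
      = (((k+j+1).factorial : ℕ) : ℚ) := by rw [← hfs]; exact hch
  have hsgn : ((-1:ℚ)^(k+1))⁻¹ * ((-1:ℚ)^k * (-1:ℚ)^j) = (-1:ℚ)^(k+j+1) * (-1:ℚ)^k := by
    rw [← inv_pow, inv_neg, inv_one, ← pow_add, ← pow_add, ← pow_add]
    congr 1
    omega
  have hk0 : ((k.factorial : ℕ) : ℚ) ≠ 0 := Nat.cast_ne_zero.mpr (Nat.factorial_ne_zero _)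
  have hj0 : ((j.factorial : ℕ) : ℚ) ≠ 0 := Nat.cast_ne_zero.mpr (Nat.factorial_ne_zero _)
  have hkj0 : (((k+j+1).factorial : ℕ) : ℚ) ≠ 0 := Nat.cast_ne_zero.mpr (Nat.factorial_ne_zero _)
  have hk10 : ((k:ℚ)+1) ≠ 0 := by positivity
  have hmag : ((k:ℚ)+1)⁻¹ * ((k.factorial : ℕ) : ℚ)⁻¹ * ((j.factorial : ℕ) : ℚ)⁻¹
      = (((k+j+1).choose (k+1) : ℕ) : ℚ) / (((k+j+1).factorial : ℕ) : ℚ) := by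
    field_simp
    linear_combination -hch'
  calc ((-1:ℚ)^(k+1) * ((k:ℚ)+1))⁻¹ * ((-1:ℚ)^k / (k.factorial : ℚ)) * ((-1:ℚ)^j / (j.factorial : ℚ))
      = (((-1:ℚ)^(k+1))⁻¹ * ((-1:ℚ)^k * (-1:ℚ)^j))
        * (((k:ℚ)+1)⁻¹ * ((k.factorial : ℕ) : ℚ)⁻¹ * ((j.factorial : ℕ) : ℚ)⁻¹) := by
        rw [mul_inv, div_eq_mul_inv, div_eq_mul_inv]; ring
    _ = _ := by rw [hsgn, hmag]

lemma L_eq : ∀ m, L m = (-1:ℚ)^m / ((m.factorial : ℕ) : ℚ) := by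
  intro m
  induction m using Nat.strong_induction_on with
  | _ m ih =>
    match m with
    | 0 => rw [L_zero]; simp
    | (m+1) =>
      rw [L_succ]
      have hterm : ∀ k ∈ Finset.range (m+1),
          ((-1:ℚ)^(k+1) * ((k:ℚ)+1))⁻¹ * L k * L (m-k)
          = ((-1:ℚ)^(m+1) / (((m+1).factorial : ℕ) : ℚ))
            * ((-1:ℚ)^k * (((m+1).choose (k+1) : ℕ) : ℚ)) := by
        intro k hk
        have hkm : k ≤ m := by have := Finset.mem_range.mp hk; omega
        rw [ih k (by omega), ih (m-k) (by omega)]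
        have h := term_eq k (m-k)
        rw [show k + (m-k) + 1 = m+1 from by omega] at h
        rw [h]
        ring
      rw [Finset.sum_congr rfl hterm, ← Finset.mul_sum, key]
      ring

/-- Yang's alternating hook length formula for plane trees. -/
theorem alternating_hook_formula_plane_trees (n : ℕ) (hn : 1 ≤ n) :
    ∑ᶠ T : {t : PTree // t.size = n},
      (n.factorial : ℚ) /
        ((T : PTree).hooks.map fun h => (-1 : ℚ) ^ (h : ℕ) * (h : ℚ)).prod
    = -1 := by
  obtain ⟨m, rfl⟩ : ∃ m, n = m + 1 := ⟨n - 1, by omega⟩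
  have hmem : ∀ t : PTree, t ∈ (forestsF m).image PTree.node ↔ t.size = m + 1 := by
    intro t
    constructor
    · intro h
      obtain ⟨cs, hcs, rfl⟩ := Finset.mem_image.mp h
      rw [size_node, (mem_forestsF m cs).mp hcs]
    · intro h
      cases t with
      | node cs =>
        rw [size_node] at h
        exact Finset.mem_image.mpr ⟨cs, (mem_forestsF m cs).mpr (by omega), rfl⟩
  haveI : Fintype {t : PTree // t.size = m + 1} :=
    Fintype.ofFinset ((forestsF m).image PTree.node) hmem
  rw [finsum_eq_sum_of_fintype,
    ← Finset.sum_subtype ((forestsF m).image PTree.node) hmem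
      (fun t => ((m+1).factorial : ℚ) /
        (t.hooks.map fun h => (-1 : ℚ) ^ (h : ℕ) * (h : ℚ)).prod)]
  have hsum : ∑ t ∈ (forestsF m).image PTree.node,
      ((m+1).factorial : ℚ) /
        (t.hooks.map fun h => (-1 : ℚ) ^ (h : ℕ) * (h : ℚ)).prod
      = (((m+1).factorial : ℕ) : ℚ) * ∑ t ∈ (forestsF m).image PTree.node, wt t := by
    rw [Finset.mul_sum]
    apply Finset.sum_congr rfl
    intro t _
    rw [wt, div_eq_mul_inv]
  rw [hsum, sum_image_node, L_eq]
  have hfs : (((m+1).factorial : ℕ) : ℚ) = ((m:ℚ)+1) * ((m.factorial : ℕ) : ℚ) := by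
    exact_mod_cast Nat.factorial_succ m
  have hsgn : (-1:ℚ)^(m+1) * (-1:ℚ)^m = -1 := by
    rw [← pow_add]
    exact Odd.neg_one_pow ⟨m, by ring⟩
  have hm0 : ((m.factorial : ℕ) : ℚ) ≠ 0 := Nat.cast_ne_zero.mpr (Nat.factorial_ne_zero _)
  have hm10 : ((m:ℚ)+1) ≠ 0 := by positivity
  rw [hfs, mul_inv, ← inv_pow, inv_neg, inv_one]
  have hre : (((m:ℚ)+1) * ((m.factorial : ℕ) : ℚ))
        * ((-1:ℚ)^(m+1) * (((m:ℚ)+1)⁻¹ * ((-1:ℚ)^m / ((m.factorial : ℕ) : ℚ))))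
      = ((-1:ℚ)^(m+1) * (-1:ℚ)^m)
        * ((((m:ℚ)+1) * (((m:ℚ)+1))⁻¹) * (((m.factorial : ℕ) : ℚ) * (((m.factorial : ℕ) : ℚ))⁻¹)) := by
    ring
  rw [mul_assoc ((-1:ℚ)^(m+1)), hre, mul_inv_cancel₀ hm10, mul_inv_cancel₀ hm0, hsgn]
  norm_num
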